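/- Let $t$ be a non-degenerate t-structure on a Krull–Schmidt triangulated category $\mathcal{D}$ whose heart $\heartsuit_t$ is finite-length, and suppose $\mathcal{D}$ has enough derived projectives with respect to $t$. Let $\silting$ be a full set of isomorphism representatives of the indecomposable derived projectives. Then $\mathcal{D}^{t\leq 0} = \silting^{\perp_{>0}}$ and $\mathcal{D}^{t\geq 0} = \silting^{\perp_{<0}}$; in particular $t$ is a silting t-structure with silting collection $\silting$. -/

import Mathlib

open CategoryTheory Limits Pretriangulated

namespace Paper

universe v u

variable {C : Type u} [Category.{v} C] [Preadditive C] [HasZeroObject C]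
  [HasShift C ℤ] [∀ n : ℤ, (shiftFunctor C n).Additive] [Pretriangulated C]

open CategoryTheory.Triangulated

/-- The right perpendicular of a class of objects. -/
def rPerp (T : Set C) : Set C := {Y | ∀ X ∈ T, ∀ f : X ⟶ Y, f = 0}

/-- The left perpendicular of a class of objects. -/
def lPerp (T : Set C) : Set C := {X | ∀ Y ∈ T, ∀ f : X ⟶ Y, f = 0}

/-- `S^{⊥_{>0}}`. -/
def perpGT (S : Set C) : Set C := {X | ∀ P ∈ S, ∀ m : ℤ, 0 < m → ∀ f : P ⟶ X⟦m⟧, f = 0}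

/-- `S^{⊥_{<0}}`. -/
def perpLT (S : Set C) : Set C := {X | ∀ P ∈ S, ∀ m : ℤ, m < 0 → ∀ f : P ⟶ X⟦m⟧, f = 0}

/-- The pair `(S^{⊥_{>0}}, S^{⊥_{<0}})` is the t-structure `t`. -/
def IsSiltingTStructureFor (S : Set C) (t : TStructure C) : Prop :=
  (∀ X : C, t.le 0 X ↔ X ∈ perpGT S) ∧ (∀ X : C, t.ge 0 X ↔ X ∈ perpLT S)

/-- `X` is a retract (direct summand) of `Y`. -/
def IsRetractOf (X Y : C) : Prop := ∃ (i : X ⟶ Y) (r : Y ⟶ X), i ≫ r = 𝟙 X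


/-- An indecomposable object: nonzero, and not a nontrivial biproduct. -/
def IndecObj {A : Type*} [Category A] [Limits.HasZeroMorphisms A]
    [HasBinaryBiproducts A] (X : A) : Prop :=
  ¬ IsZero X ∧ ∀ Y Z : A, Nonempty (X ≅ Y ⊞ Z) → IsZero Y ∨ IsZero Z

section Biprod
variable [HasFiniteBiproducts C]

/-- The Karoubi closure: direct summands of finite coproducts of objects of `S`. -/
def Kar (S : Set C) : Set C :=
  {X | ∃ (n : ℕ) (f : Fin n → C), (∀ i, f i ∈ S) ∧ IsRetractOf X (⨁ f)}

/-- A class of objects is Krull–Schmidt: every object is a finite biproduct of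
objects of the class with local endomorphism rings. -/
def KrullSchmidtOn (T : Set C) : Prop :=
  ∀ X ∈ T, ∃ (n : ℕ) (f : Fin n → C),
    (∀ i, f i ∈ T ∧ IsLocalRing (End (f i))) ∧ Nonempty (X ≅ ⨁ f)

/-- The category `C` is Krull–Schmidt. -/
def IsKrullSchmidt : Prop :=
  ∀ X : C, ∃ (n : ℕ) (f : Fin n → C),
    (∀ i, IsLocalRing (End (f i))) ∧ Nonempty (X ≅ ⨁ f)

/-- A silting collection: pairwise non-isomorphic indecomposables whose Karoubi
closure is Krull–Schmidt, such that the perpendicular pair is the t-structure `t`. -/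
structure IsSiltingCollection (S : Set C) (t : TStructure C) : Prop where
  indec : ∀ P ∈ S, IndecObj P
  pairwise_noniso : ∀ P ∈ S, ∀ Q ∈ S, P ≠ Q → IsEmpty (P ≅ Q)
  kar_ks : KrullSchmidtOn (Kar S)
  tstr : IsSiltingTStructureFor S t

end Biprod

/-- Derived projective objects with respect to a t-structure. -/
def IsDerivedProjective (t : TStructure C) (P : C) : Prop :=
  t.le 0 P ∧ ∀ (X : C), t.le 0 X → ∀ f : P ⟶ X⟦(1 : ℤ)⟧, f = 0

/-- The heart of a t-structure, as a class of objects. -/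
def heartSet (t : TStructure C) : Set C := {X | t.le 0 X ∧ t.ge 0 X}

/-- The heart of a t-structure, as a full subcategory. -/
abbrev Heart (t : TStructure C) := ObjectProperty.FullSubcategory (C := C) (heartSet t)

instance (t : TStructure C) : Category (Heart t) := ObjectProperty.FullSubcategory.category _

instance (P : C → Prop) : Preadditive (ObjectProperty.FullSubcategory P) where
  homGroup X Y := InducedCategory.homEquiv.addCommGroup
  add_comp _ _ _ f f' g := by ext; exact Preadditive.add_comp _ _ _ f.hom f'.hom g.hom
  comp_add _ _ _ f g g' := by ext; exact Preadditive.comp_add _ _ _ f.hom g.hom g'.hom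

/-- Truncation data for a t-structure: the truncation functors `t_{≤0}` (right adjoint
to the inclusion of `D^{t≤0}`), `t_{≥0}` (left adjoint to the inclusion of `D^{t≥0}`),
and the zeroth cohomology functor `H = t_{≤0} ∘ t_{≥0}`. -/
structure TruncationData (t : TStructure C) where
  /-- the zeroth cohomology functor -/
  H : C ⥤ C
  H_heart : ∀ X : C, H.obj X ∈ heartSet t
  τle : C ⥤ C
  τleCounit : τle ⟶ 𝟭 C
  τle_mem : ∀ X : C, t.le 0 (τle.obj X)
  τle_fac : ∀ (X Z : C), t.le 0 Z → ∀ f : Z ⟶ X,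
    ∃! g : Z ⟶ τle.obj X, g ≫ τleCounit.app X = f
  τge : C ⥤ C
  τgeUnit : 𝟭 C ⟶ τge
  τge_mem : ∀ X : C, t.ge 0 (τge.obj X)
  τge_fac : ∀ (X Z : C), t.ge 0 Z → ∀ f : X ⟶ Z,
    ∃! g : τge.obj X ⟶ Z, τgeUnit.app X ≫ g = f
  H_eq : H = τge ⋙ τle

/-- The zeroth cohomology functor, valued in the heart. -/
def TruncationData.Hh {t : TStructure C} (TD : TruncationData t) : C ⥤ Heart t :=
  ObjectProperty.lift _ TD.H TD.H_heart

/-- A projective cover: an essential epimorphism from a projective object. -/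
def IsProjectiveCover {A : Type*} [Category A] {P X : A} (π : P ⟶ X) : Prop :=
  Projective P ∧ Epi π ∧ ∀ (R : A) (g : R ⟶ P), Epi (g ≫ π) → Epi g

/-- A derived projective cover of `X`. -/
def IsDerivedProjectiveCover {t : TStructure C} (TD : TruncationData t)
    {P X : C} (π : P ⟶ X) : Prop :=
  IsDerivedProjective t P ∧ IsProjectiveCover (TD.Hh.map π)

/-- A t-structure is non-degenerate. -/
def NonDegenerate (t : TStructure C) : Prop :=
  (∀ X : C, (∀ n : ℤ, t.le n X) → IsZero X) ∧ (∀ X : C, (∀ n : ℤ, t.ge n X) → IsZero X)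

/-- An object of a category has finite length: bounded chains of subobjects. -/
def FiniteLengthObj {A : Type*} [Category A] (X : A) : Prop :=
  ∃ n : ℕ, ∀ s : Fin (n + 1) → Subobject X, ¬ StrictMono s

/-- `D` has derived projectives: every projective of the heart is `H⁰` of a
derived projective. -/
def HasDerivedProjectives {t : TStructure C} (TD : TruncationData t) : Prop :=
  ∀ Q : Heart t, Projective Q → ∃ P : C, IsDerivedProjective t P ∧ Nonempty (TD.Hh.obj P ≅ Q)

/-- `D` has enough derived projectives. -/
def HasEnoughDerivedProjectives {t : TStructure C} (TD : TruncationData t) : Prop :=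
  EnoughProjectives (Heart t) ∧ HasDerivedProjectives TD

/-- The extension closure of a class of objects. -/
inductive ExtClos (T : Set C) : C → Prop
  | of {X : C} : X ∈ T → ExtClos T X
  | zero {X : C} : IsZero X → ExtClos T X
  | ext {A E B : C} (f : A ⟶ E) (g : E ⟶ B) (h : B ⟶ A⟦(1 : ℤ)⟧) :
      Triangle.mk f g h ∈ (distTriang C) → ExtClos T A → ExtClos T B → ExtClos T E

/-- The Karoubi (retract) closure of a class of objects. -/
def KarClos (T : Set C) : Set C := {X | ∃ Y ∈ T, IsRetractOf X Y}

/-- The triangulated subcategory generated by a class of objects. -/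
inductive TriaClos (T : Set C) : C → Prop
  | of {X : C} : X ∈ T → TriaClos T X
  | zero {X : C} : IsZero X → TriaClos T X
  | shift {X : C} (n : ℤ) : TriaClos T X → TriaClos T (X⟦n⟧)
  | ext {A E B : C} (f : A ⟶ E) (g : E ⟶ B) (h : B ⟶ A⟦(1 : ℤ)⟧) :
      Triangle.mk f g h ∈ (distTriang C) → TriaClos T A → TriaClos T B → TriaClos T E

/-- The thick subcategory generated by a class of objects. -/
inductive ThickClos (T : Set C) : C → Prop
  | of {X : C} : X ∈ T → ThickClos T X
  | zero {X : C} : IsZero X → ThickClos T X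
  | shift {X : C} (n : ℤ) : ThickClos T X → ThickClos T (X⟦n⟧)
  | ext {A E B : C} (f : A ⟶ E) (g : E ⟶ B) (h : B ⟶ A⟦(1 : ℤ)⟧) :
      Triangle.mk f g h ∈ (distTriang C) → ThickClos T A → ThickClos T B → ThickClos T E
  | retract {X Y : C} : IsRetractOf X Y → ThickClos T Y → ThickClos T X

/-- A thick subcategory, as a class of objects. -/
structure IsThickSet (T : Set C) : Prop where
  zero : ∀ X : C, IsZero X → X ∈ T
  shift : ∀ X ∈ T, ∀ n : ℤ, X⟦n⟧ ∈ T
  ext : ∀ (A E B : C) (f : A ⟶ E) (g : E ⟶ B) (h : B ⟶ A⟦(1 : ℤ)⟧),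
    Triangle.mk f g h ∈ (distTriang C) → A ∈ T → B ∈ T → E ∈ T
  retract : ∀ X Y : C, IsRetractOf X Y → Y ∈ T → X ∈ T

/-- A weight structure on the subcategory of `C` given by the class `CC`. -/
structure WeightStructureOn (CC : Set C) where
  le : Set C
  ge : Set C
  le_sub : le ⊆ CC
  ge_sub : ge ⊆ CC
  le_iso : ∀ X Y : C, (X ≅ Y) → X ∈ le → Y ∈ le
  ge_iso : ∀ X Y : C, (X ≅ Y) → X ∈ ge → Y ∈ ge
  le_retract : ∀ X Y : C, IsRetractOf X Y → Y ∈ le → X ∈ le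
  ge_retract : ∀ X Y : C, IsRetractOf X Y → Y ∈ ge → X ∈ ge
  le_shift : ∀ X ∈ le, X⟦(1 : ℤ)⟧ ∈ le
  ge_shift : ∀ X ∈ ge, X⟦(-1 : ℤ)⟧ ∈ ge
  orth : ∀ X : C, X⟦(1 : ℤ)⟧ ∈ ge → ∀ Y ∈ le, ∀ f : X ⟶ Y, f = 0
  decomp : ∀ X ∈ CC, ∃ (A B : C) (f : A ⟶ X) (g : X ⟶ B) (h : B ⟶ A⟦(1 : ℤ)⟧),
    Triangle.mk f g h ∈ (distTriang C) ∧ A⟦(1 : ℤ)⟧ ∈ ge ∧ B ∈ le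

namespace WeightStructureOn

variable {CC : Set C} (w : WeightStructureOn CC)

/-- `C_{w>0}`. -/
def gt : Set C := {X | X⟦(1 : ℤ)⟧ ∈ w.ge}

/-- `C_{w<0}`. -/
def lt : Set C := {X | X⟦(-1 : ℤ)⟧ ∈ w.le}

end WeightStructureOn


section SiltingHelpers

variable (t : TStructure C)

instance heartPreadditive : Preadditive (Heart t) where
  homGroup X Y := InducedCategory.homEquiv.addCommGroup
  add_comp _ _ _ f f' g := by ext; exact Preadditive.add_comp _ _ _ f.hom f'.hom g.hom
  comp_add _ _ _ f g g' := by ext; exact Preadditive.comp_add _ _ _ f.hom g.hom g'.hom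

/-- Orthogonality for arbitrary degrees. -/
lemma tzero {X Y : C} (f : X ⟶ Y) {n₀ n₁ : ℤ} (h : n₀ < n₁)
    (hX : t.le n₀ X) (hY : t.ge n₁ Y) : f = 0 := by
  have hX' : t.le 0 (X⟦n₀⟧) := t.le_shift n₀ n₀ 0 (add_zero n₀) X hX
  have hY' : t.ge 1 (Y⟦n₀⟧) :=
    t.ge_antitone (show (1:ℤ) ≤ n₁ - n₀ by omega) _
      (t.ge_shift n₁ n₀ (n₁ - n₀) (by ring) Y hY)
  have h0 : f⟦n₀⟧' = 0 := t.zero' _ hX' hY'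
  apply (shiftFunctor C n₀).map_injective
  rw [h0, Functor.map_zero]


section TriWrap
variable {A X B : C} {f : A ⟶ X} {g : X ⟶ B} {h : B ⟶ A⟦(1:ℤ)⟧}
  (mem : Triangle.mk f g h ∈ distTriang C)

include mem

lemma yon₂ {Z : C} (k : X ⟶ Z) (hk : f ≫ k = 0) : ∃ l : B ⟶ Z, k = g ≫ l :=
  Triangle.yoneda_exact₂ _ mem k hk

lemma yon₃ {Z : C} (u : B ⟶ Z) (hu : g ≫ u = 0) : ∃ v : A⟦(1:ℤ)⟧ ⟶ Z, u = h ≫ v :=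
  Triangle.yoneda_exact₃ _ mem u hu

lemma coyon₂ {Z : C} (k : Z ⟶ X) (hk : k ≫ g = 0) : ∃ l : Z ⟶ A, k = l ≫ f :=
  Triangle.coyoneda_exact₂ _ mem k hk

lemma coyon₃ {Z : C} (v : Z ⟶ B) (hv : v ≫ h = 0) : ∃ k : Z ⟶ X, v = k ≫ g :=
  Triangle.coyoneda_exact₃ _ mem v hv

lemma coyon₁ {Z : C} (v : Z ⟶ A) (hv : v ≫ f = 0) :
    ∃ (m : Z ⟶ B⟦(-1:ℤ)⟧) (w : B⟦(-1:ℤ)⟧ ⟶ A), v = m ≫ w := by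
  obtain ⟨m, hm⟩ := Triangle.coyoneda_exact₂ _ (inv_rot_of_distTriang _ mem) v hv
  exact ⟨m, _, hm⟩

lemma zero₃_isIso₁ (hz : IsZero B) : IsIso f :=
  (Triangle.isZero₃_iff_isIso₁ _ mem).1 hz

lemma zero₁_isIso₂ (hz : IsZero A) : IsIso g :=
  (Triangle.isZero₁_iff_isIso₂ _ mem).1 hz

end TriWrap


lemma shift_triangle_mem {A X B : C} {f : A ⟶ X} {g : X ⟶ B} {h : B ⟶ A⟦(1:ℤ)⟧}
    (mem : Triangle.mk f g h ∈ distTriang C) (n : ℤ) :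
    ∃ (f' : A⟦n⟧ ⟶ X⟦n⟧) (g' : X⟦n⟧ ⟶ B⟦n⟧) (h' : B⟦n⟧ ⟶ (A⟦n⟧)⟦(1:ℤ)⟧),
      Triangle.mk f' g' h' ∈ distTriang C :=
  ⟨_, _, _, Triangle.shift_distinguished (Triangle.mk f g h) mem n⟩

lemma LE_of_orth {X : C} (h : ∀ Z : C, t.ge 1 Z → ∀ f : X ⟶ Z, f = 0) :
    t.le 0 X := by
  obtain ⟨A, B, hA, hB, f, g, hh, mem⟩ := t.exists_triangle_zero_one X
  obtain ⟨u, hu⟩ := yon₃ mem (𝟙 B) (by rw [Category.comp_id]; exact h B hB g)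
  have hu0 : u = 0 := tzero t u (show (-1:ℤ) < 1 by omega)
    (t.le_shift 0 1 (-1) (by ring) A hA) hB
  have hzB : IsZero B := by
    rw [IsZero.iff_id_eq_zero, hu, hu0, Limits.comp_zero]
  have : IsIso f := zero₃_isIso₁ mem hzB
  exact (t.le 0).prop_of_iso (asIso f) hA

lemma LE_retract {X Y : C} (hr : IsRetractOf X Y) (hY : t.le 0 Y) : t.le 0 X := by
  obtain ⟨i, r, hir⟩ := hr
  refine LE_of_orth t fun Z hZ f => ?_
  have h0 : r ≫ f = 0 := tzero t _ (show (0:ℤ) < 1 by omega) hY hZ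
  rw [← Category.id_comp f, ← hir, Category.assoc, h0, Limits.comp_zero]

lemma triangle_obj₃_LE {A X B : C} {f : A ⟶ X} {g : X ⟶ B} {h : B ⟶ A⟦(1:ℤ)⟧}
    (mem : Triangle.mk f g h ∈ distTriang C) (hA : t.le (-1) A) (hX : t.le 0 X) :
    t.le 0 B := by
  refine LE_of_orth t fun Z hZ u => ?_
  obtain ⟨v, hv⟩ := yon₃ mem u (tzero t _ (show (0:ℤ) < 1 by omega) hX hZ)
  have hv0 : v = 0 := tzero t v (show (-2:ℤ) < 1 by omega)
    (t.le_shift (-1) 1 (-2) (by ring) A hA) hZ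
  rw [hv, hv0, Limits.comp_zero]

variable (TD : TruncationData t)

lemma compGE {A X B : C} {f : A ⟶ X} {g : X ⟶ B} {h : B ⟶ A⟦(1:ℤ)⟧}
    (mem : Triangle.mk f g h ∈ distTriang C) (hA : t.le (-1) A) (hB : t.ge 0 B) :
    ∃ e : B ≅ TD.τge.obj X, g ≫ e.hom = TD.τgeUnit.app X := by
  have ex : ∀ Z : C, t.ge 0 Z → ∀ k : X ⟶ Z, ∃! l : B ⟶ Z, g ≫ l = k := by
    intro Z hZ k
    obtain ⟨l, hl⟩ := yon₂ mem k (tzero t _ (show (-1:ℤ) < 0 by omega) hA hZ)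
    refine ⟨l, hl.symm, fun l' hl' => ?_⟩
    have hsub : g ≫ (l' - l) = 0 := by
      rw [Preadditive.comp_sub, hl', ← hl, sub_self]
    obtain ⟨v, hv⟩ := yon₃ mem (l' - l) hsub
    have hv0 : v = 0 := tzero t v (show (-2:ℤ) < 0 by omega)
      (t.le_shift (-1) 1 (-2) (by ring) A hA) hZ
    have : l' - l = 0 := by rw [hv, hv0, Limits.comp_zero]
    exact sub_eq_zero.1 this
  obtain ⟨ψ, hψ, -⟩ := ex _ (TD.τge_mem X) (TD.τgeUnit.app X)
  obtain ⟨φ, hφ, -⟩ := TD.τge_fac X B hB g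
  have h1 : ψ ≫ φ = 𝟙 B := by
    obtain ⟨l, -, hu⟩ := ex B hB g
    rw [hu (ψ ≫ φ) (show g ≫ (ψ ≫ φ) = g by rw [← Category.assoc, hψ, hφ]),
      hu (𝟙 B) (Category.comp_id g)]
  have h2 : φ ≫ ψ = 𝟙 _ := by
    obtain ⟨l, -, hu⟩ := TD.τge_fac X (TD.τge.obj X) (TD.τge_mem X) (TD.τgeUnit.app X)
    rw [hu (φ ≫ ψ) (show TD.τgeUnit.app X ≫ (φ ≫ ψ) = TD.τgeUnit.app X by
        rw [← Category.assoc, hφ, hψ]),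
      hu (𝟙 _) (Category.comp_id _)]
  exact ⟨⟨ψ, φ, h1, h2⟩, hψ⟩

lemma compLE {A X B : C} {f : A ⟶ X} {g : X ⟶ B} {h : B ⟶ A⟦(1:ℤ)⟧}
    (mem : Triangle.mk f g h ∈ distTriang C) (hA : t.le 0 A) (hB : t.ge 1 B) :
    ∃ e : A ≅ TD.τle.obj X, e.hom ≫ TD.τleCounit.app X = f := by
  have ex : ∀ Z : C, t.le 0 Z → ∀ k : Z ⟶ X, ∃! l : Z ⟶ A, l ≫ f = k := by
    intro Z hZ k
    obtain ⟨l, hl⟩ := coyon₂ mem k (tzero t _ (show (0:ℤ) < 1 by omega) hZ hB)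
    refine ⟨l, hl.symm, fun l' hl' => ?_⟩
    have hsub : (l' - l) ≫ f = 0 := by
      rw [Preadditive.sub_comp, hl', ← hl, sub_self]
    obtain ⟨m, w, hm⟩ := coyon₁ mem (l' - l) hsub
    have hm0 : m = 0 := tzero t m (show (0:ℤ) < 2 by omega) hZ
      (t.ge_shift 1 (-1) 2 (by ring) B hB)
    have : l' - l = 0 := by rw [hm, hm0, Limits.zero_comp]
    exact sub_eq_zero.1 this
  obtain ⟨ψ, hψ, -⟩ := ex _ (TD.τle_mem X) (TD.τleCounit.app X)
  obtain ⟨φ, hφ, -⟩ := TD.τle_fac X A hA f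
  have h1 : φ ≫ ψ = 𝟙 A := by
    obtain ⟨l, -, hu⟩ := ex A hA f
    rw [hu (φ ≫ ψ) (show (φ ≫ ψ) ≫ f = f by rw [Category.assoc, hψ, hφ]),
      hu (𝟙 A) (Category.id_comp f)]
  have h2 : ψ ≫ φ = 𝟙 _ := by
    obtain ⟨l, -, hu⟩ := TD.τle_fac X (TD.τle.obj X) (TD.τle_mem X) (TD.τleCounit.app X)
    rw [hu (ψ ≫ φ) (show (ψ ≫ φ) ≫ TD.τleCounit.app X = TD.τleCounit.app X by
        rw [Category.assoc, hφ, hψ]),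
      hu (𝟙 _) (Category.id_comp _)]
  exact ⟨⟨φ, ψ, h1, h2⟩, hφ⟩

lemma counit_isIso (W : C) (hW : t.le 0 W) : IsIso (TD.τleCounit.app W) := by
  obtain ⟨φ, hφ, -⟩ := TD.τle_fac W W hW (𝟙 W)
  obtain ⟨l, -, hu⟩ := TD.τle_fac W (TD.τle.obj W) (TD.τle_mem W) (TD.τleCounit.app W)
  exact ⟨⟨φ, by
    rw [hu (TD.τleCounit.app W ≫ φ) (show (TD.τleCounit.app W ≫ φ) ≫ TD.τleCounit.app W =
        TD.τleCounit.app W by rw [Category.assoc, hφ]; exact Category.comp_id _),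
      hu (𝟙 _) (Category.id_comp _)], hφ⟩⟩

lemma unit_isIso (W : C) (hW : t.ge 0 W) : IsIso (TD.τgeUnit.app W) := by
  obtain ⟨φ, hφ, -⟩ := TD.τge_fac W W hW (𝟙 W)
  obtain ⟨l, -, hu⟩ := TD.τge_fac W (TD.τge.obj W) (TD.τge_mem W) (TD.τgeUnit.app W)
  exact ⟨⟨φ, hφ, by
    rw [hu (φ ≫ TD.τgeUnit.app W) (show TD.τgeUnit.app W ≫ (φ ≫ TD.τgeUnit.app W) =
        TD.τgeUnit.app W by rw [← Category.assoc, hφ]; exact Category.id_comp _),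
      hu (𝟙 _) (Category.comp_id _)]⟩⟩

lemma τge_LE {P : C} (hP : t.le 0 P) : t.le 0 (TD.τge.obj P) := by
  obtain ⟨A, B, hA, hB, f, g, hh, mem⟩ := t.exists_triangle P (-1) 0 (by ring)
  obtain ⟨e, -⟩ := compGE t TD mem hA hB
  exact (t.le 0).prop_of_iso e (triangle_obj₃_LE t mem hA hP)

lemma H_obj_eq (Z : C) : TD.H.obj Z = TD.τle.obj (TD.τge.obj Z) := by
  rw [TD.H_eq]; rfl

lemma derProj_hom_zero {P Z : C} (hP : IsDerivedProjective t P) (hZ : t.le (-1) Z)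
    (f : P ⟶ Z) : f = 0 := by
  have h1 : t.le 0 (Z⟦(-1:ℤ)⟧) := t.le_shift (-1) (-1) 0 (by ring) Z hZ
  let e := (shiftFunctorCompIsoId C (-1 : ℤ) (1 : ℤ) (by ring)).app Z
  have h2 : f ≫ e.inv = 0 := hP.2 _ h1 _
  have : f = (f ≫ e.inv) ≫ e.hom := by
    rw [Category.assoc, e.inv_hom_id]; exact (Category.comp_id f).symm
  rw [this, h2, Limits.zero_comp]

lemma lift_unit {P : C} (hP : IsDerivedProjective t P) (Z : C)
    (v : P ⟶ TD.τge.obj Z) : ∃ k : P ⟶ Z, k ≫ TD.τgeUnit.app Z = v := by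
  obtain ⟨A, B, hA, hB, f, g, hh, mem⟩ := t.exists_triangle Z (-1) 0 (by ring)
  obtain ⟨e, he⟩ := compGE t TD mem hA hB
  have hv3 : (v ≫ e.inv) ≫ hh = 0 :=
    derProj_hom_zero t hP
      (t.le_monotone (show (-2:ℤ) ≤ -1 by omega) _
        (t.le_shift (-1) 1 (-2) (by ring) A hA)) _
  obtain ⟨k, hk⟩ := coyon₃ mem (v ≫ e.inv) hv3
  exact ⟨k, by
    rw [← he, ← Category.assoc, ← hk, Category.assoc, e.inv_hom_id, Category.comp_id]⟩

lemma key_vanish {P : C} (hP : IsDerivedProjective t P) (Z : C)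
    (h0 : ∀ k : P ⟶ Z, k = 0) (v : P ⟶ TD.H.obj Z) : v = 0 := by
  let E : TD.H.obj Z ≅ TD.τle.obj (TD.τge.obj Z) := eqToIso (H_obj_eq t TD Z)
  obtain ⟨k, hk⟩ := lift_unit t TD hP Z ((v ≫ E.hom) ≫ TD.τleCounit.app (TD.τge.obj Z))
  rw [h0 k, Limits.zero_comp] at hk
  obtain ⟨l, -, hu⟩ := TD.τle_fac (TD.τge.obj Z) P hP.1 (0 : P ⟶ TD.τge.obj Z)
  have h1 : v ≫ E.hom = l := hu _ hk.symm
  have h2 : (0 : P ⟶ TD.τle.obj (TD.τge.obj Z)) = l := hu 0 (by exact Limits.zero_comp)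
  have h3 : v ≫ E.hom = 0 := by rw [h1, ← h2]
  rw [← Category.comp_id v, ← E.hom_inv_id, ← Category.assoc, h3, Limits.zero_comp]

lemma heart_vanish {P : C} (hP : IsDerivedProjective t P) (Z : C)
    (h0 : ∀ k : P ⟶ Z, k = 0) (u : TD.H.obj P ⟶ TD.H.obj Z) : u = 0 := by
  have hle : t.le 0 (TD.τge.obj P) := τge_LE t TD hP.1
  have hc : IsIso (TD.τleCounit.app (TD.τge.obj P)) := counit_isIso t TD _ hle
  let E : TD.H.obj P ≅ TD.τle.obj (TD.τge.obj P) := eqToIso (H_obj_eq t TD P)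
  set c := TD.τleCounit.app (TD.τge.obj P) with hcdef
  have hGE : t.ge 0 (TD.H.obj Z) := (TD.H_heart Z).2
  obtain ⟨l, -, hu⟩ := TD.τge_fac P (TD.H.obj Z) hGE (0 : P ⟶ TD.H.obj Z)
  have h1 : inv c ≫ E.inv ≫ u = l :=
    hu _ (key_vanish t TD hP Z h0 _)
  have h2 : (0 : TD.τge.obj P ⟶ TD.H.obj Z) = l := hu 0 (by exact Limits.comp_zero)
  have h3 : inv c ≫ E.inv ≫ u = 0 := by rw [h1, ← h2]
  have h4 := congrArg (fun m => E.hom ≫ c ≫ m) h3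
  simpa using h4

lemma GE_step {Y : C} {n : ℤ} (hn : t.ge n Y)
    (hz : IsZero (TD.H.obj (Y⟦n⟧))) : t.ge (n+1) Y := by
  have hW : t.ge 0 (Y⟦n⟧) := t.ge_shift n n 0 (add_zero n) Y hn
  have hiso : IsIso (TD.τgeUnit.app (Y⟦n⟧)) := unit_isIso t TD _ hW
  have hz1 : IsZero (TD.τle.obj (TD.τge.obj (Y⟦n⟧))) :=
    hz.of_iso (eqToIso (H_obj_eq t TD (Y⟦n⟧))).symm
  have hz2 : IsZero (TD.τle.obj (Y⟦n⟧)) :=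
    hz1.of_iso (TD.τle.mapIso (asIso (TD.τgeUnit.app (Y⟦n⟧))))
  obtain ⟨A, B, hA, hB, f, g, hh, mem⟩ := t.exists_triangle_zero_one (Y⟦n⟧)
  obtain ⟨e, -⟩ := compLE t TD mem hA hB
  have hzA : IsZero A := hz2.of_iso e
  have : IsIso g := zero₁_isIso₂ mem hzA
  have hW1 : t.ge 1 (Y⟦n⟧) := (t.ge 1).prop_of_iso (asIso g).symm hB
  have hsh : t.ge (1 + n) ((Y⟦n⟧)⟦-n⟧) := t.ge_shift 1 (-n) (1+n) (by ring) _ hW1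
  have hfin := (t.ge (1+n)).prop_of_iso
    ((shiftFunctorCompIsoId C n (-n) (add_neg_cancel n)).app Y) hsh
  have h9 : 1 + n = n + 1 := by ring
  rwa [h9] at hfin

lemma LE_step {Y : C} {n : ℤ} (hn : t.le n Y)
    (hz : IsZero (TD.H.obj (Y⟦n⟧))) : t.le (n-1) Y := by
  have hW : t.le 0 (Y⟦n⟧) := t.le_shift n n 0 (add_zero n) Y hn
  obtain ⟨A, B, hA, hB, f, g, hh, mem⟩ := t.exists_triangle (Y⟦n⟧) (-1) 0 (by ring)
  obtain ⟨e, -⟩ := compGE t TD mem hA hB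
  have hBle : t.le 0 B := triangle_obj₃_LE t mem hA hW
  have hτle : t.le 0 (TD.τge.obj (Y⟦n⟧)) := (t.le 0).prop_of_iso e hBle
  have hc : IsIso (TD.τleCounit.app (TD.τge.obj (Y⟦n⟧))) := counit_isIso t TD _ hτle
  have hz1 : IsZero (TD.τle.obj (TD.τge.obj (Y⟦n⟧))) :=
    hz.of_iso (eqToIso (H_obj_eq t TD (Y⟦n⟧))).symm
  have hz2 : IsZero (TD.τge.obj (Y⟦n⟧)) :=
    hz1.of_iso (asIso (TD.τleCounit.app (TD.τge.obj (Y⟦n⟧)))).symm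
  have hzB : IsZero B := hz2.of_iso e
  have : IsIso f := zero₃_isIso₁ mem hzB
  have hW1 : t.le (-1) (Y⟦n⟧) := (t.le (-1)).prop_of_iso (asIso f) hA
  have hsh : t.le (n-1) ((Y⟦n⟧)⟦-n⟧) := t.le_shift (-1) (-n) (n-1) (by ring) _ hW1
  exact (t.le (n-1)).prop_of_iso
    ((shiftFunctorCompIsoId C n (-n) (add_neg_cancel n)).app Y) hsh

lemma isZero_of_epi_zero {A : Type*} [Category A] [Preadditive A] {X Y : A}
    (f : X ⟶ Y) (hepi : Epi f) (h : f = 0) : IsZero Y := by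
  rw [IsZero.iff_id_eq_zero, ← cancel_epi f, h, Limits.zero_comp, Limits.comp_zero]

lemma indec_of_local [HasBinaryBiproducts C] {X : C} (h : IsLocalRing (End X)) :
    IndecObj X := by
  constructor
  · intro hz
    rw [IsZero.iff_id_eq_zero] at hz
    exact one_ne_zero (α := End X) hz
  · rintro Y Z ⟨φ⟩
    set a : End X := φ.hom ≫ biprod.fst ≫ biprod.inl ≫ φ.inv with hadef
    set b : End X := φ.hom ≫ biprod.snd ≫ biprod.inr ≫ φ.inv with hbdef
    have hab : a + b = 1 := by
      show (φ.hom ≫ biprod.fst ≫ biprod.inl ≫ φ.inv) +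
        (φ.hom ≫ biprod.snd ≫ biprod.inr ≫ φ.inv) = 𝟙 X
      rw [← Preadditive.comp_add, ← Category.assoc (biprod.fst), ← Category.assoc (biprod.snd),
        ← Preadditive.add_comp, biprod.total, Category.id_comp, φ.hom_inv_id]
    have haa : a * a = a := by
      show a ≫ a = a
      rw [hadef]
      simp
    have hbb : b * b = b := by
      show b ≫ b = b
      rw [hbdef]
      simp
    rcases h.isUnit_or_isUnit_of_add_one hab with hu | hu
    · right
      have ha1 : a = 1 := hu.mul_left_cancel (by rw [haa, mul_one])
      have hb0 : b = 0 := by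
        have h' := hab
        rw [ha1] at h'
        simpa using h'
      have h1 : (biprod.snd : Y ⊞ Z ⟶ Z) ≫ (biprod.inr : Z ⟶ Y ⊞ Z) = 0 := by
        have h2 := congrArg (fun m => φ.inv ≫ m ≫ φ.hom) hb0
        simpa [hbdef] using h2
      rw [IsZero.iff_id_eq_zero]
      have h3 := congrArg (fun m => (biprod.inr : Z ⟶ Y ⊞ Z) ≫ m ≫ biprod.snd) h1
      simpa using h3
    · left
      have hb1 : b = 1 := hu.mul_left_cancel (by rw [hbb, mul_one])
      have ha0 : a = 0 := by
        have h' := hab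
        rw [hb1] at h'
        simpa using h'
      have h1 : (biprod.fst : Y ⊞ Z ⟶ Y) ≫ (biprod.inl : Y ⟶ Y ⊞ Z) = 0 := by
        have h2 := congrArg (fun m => φ.inv ≫ m ≫ φ.hom) ha0
        simpa [hadef] using h2
      rw [IsZero.iff_id_eq_zero]
      have h3 := congrArg (fun m => (biprod.inl : Y ⟶ Y ⊞ Z) ≫ m ≫ biprod.fst) h1
      simpa using h3

lemma P0_vanish [HasFiniteBiproducts C]
    (hKS : IsKrullSchmidt (C := C)) {S : Set C}
    (hS3 : ∀ P : C, IsDerivedProjective t P → IndecObj P → ∃ Q ∈ S, Nonempty (P ≅ Q))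
    {W : C} (hw : ∀ P ∈ S, ∀ f : P ⟶ W, f = 0)
    {P₀ : C} (hP₀ : IsDerivedProjective t P₀) : ∀ k : P₀ ⟶ W, k = 0 := by
  obtain ⟨n, fam, hloc, ⟨φ⟩⟩ := hKS P₀
  intro k
  have hcomp : ∀ j, biproduct.ι fam j ≫ (φ.inv ≫ k) = 0 := by
    intro j
    have hret : IsRetractOf (fam j) P₀ :=
      ⟨biproduct.ι fam j ≫ φ.inv, φ.hom ≫ biproduct.π fam j, by simp⟩
    have hdp : IsDerivedProjective t (fam j) := by
      constructor
      · exact LE_retract t hret hP₀.1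
      · intro Xx hXx u
        obtain ⟨i, r, hir⟩ := hret
        have h0 : r ≫ u = 0 := hP₀.2 Xx hXx _
        rw [← Category.id_comp u, ← hir, Category.assoc, h0, Limits.comp_zero]
    have hind : IndecObj (fam j) := indec_of_local (hloc j)
    obtain ⟨Q, hQ, ⟨ε⟩⟩ := hS3 (fam j) hdp hind
    have h0 : ε.inv ≫ biproduct.ι fam j ≫ (φ.inv ≫ k) = 0 := hw Q hQ _
    have h1 := congrArg (fun m => ε.hom ≫ m) h0
    simpa using h1
  have h2 : φ.inv ≫ k = 0 :=
    biproduct.hom_ext' _ _ (fun j => by rw [hcomp j, Limits.comp_zero])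
  rw [← Category.id_comp k, ← φ.hom_inv_id, Category.assoc, h2, Limits.comp_zero]

lemma heart_isZero_obj {M : Heart t} (h : IsZero M) : IsZero M.obj := by
  rw [IsZero.iff_id_eq_zero] at h ⊢
  exact congrArg (fun f => f.hom) h

lemma H_isZero [HasFiniteBiproducts C]
    (hKS : IsKrullSchmidt (C := C)) (hED : HasEnoughDerivedProjectives TD)
    {S : Set C}
    (hS3 : ∀ P : C, IsDerivedProjective t P → IndecObj P → ∃ Q ∈ S, Nonempty (P ≅ Q))
    {W : C} (hw : ∀ P ∈ S, ∀ f : P ⟶ W, f = 0) : IsZero (TD.H.obj W) := by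
  obtain ⟨pp⟩ := hED.1.presentation (TD.Hh.obj W)
  obtain ⟨P₀, hP₀, ⟨ε⟩⟩ := hED.2 pp.p pp.projective
  haveI := pp.epi
  have hπ : Epi (ε.hom ≫ pp.f) := epi_comp _ _
  have hzero : (ε.hom ≫ pp.f) = 0 := by
    ext
    exact heart_vanish t TD hP₀ W (P0_vanish t hKS hS3 hw hP₀) (ε.hom ≫ pp.f).hom
  exact heart_isZero_obj t (isZero_of_epi_zero _ hπ hzero)

end SiltingHelpers

/-- if a non-degenerate t-structure with finite-length heart has enough
derived projectives, then it is the silting t-structure of the collection of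
indecomposable derived projectives. -/
theorem enough_derivedProjectives_silting [HasFiniteBiproducts C]
    (hKS : IsKrullSchmidt (C := C)) (t : TStructure C) (TD : TruncationData t)
    (hnd : NonDegenerate t)
    (hfl : ∀ X : Heart t, FiniteLengthObj X)
    (hED : HasEnoughDerivedProjectives TD)
    (S : Set C)
    (hS1 : ∀ P ∈ S, IsDerivedProjective t P ∧ IndecObj P)
    (hS2 : ∀ P ∈ S, ∀ Q ∈ S, P ≠ Q → IsEmpty (P ≅ Q))
    (hS3 : ∀ P : C, IsDerivedProjective t P → IndecObj P → ∃ Q ∈ S, Nonempty (P ≅ Q)) :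
    (∀ X : C, t.le 0 X ↔ X ∈ perpGT S) ∧ (∀ X : C, t.ge 0 X ↔ X ∈ perpLT S) := by
  constructor
  · intro X
    constructor
    · intro hX P hPS m hm v
      have hXm : t.le (-1) (X⟦m⟧) :=
        t.le_monotone (show -m ≤ (-1:ℤ) by omega) _ (t.le_shift 0 m (-m) (by ring) X hX)
      exact derProj_hom_zero t (hS1 P hPS).1 hXm v
    · intro hX
      obtain ⟨A, B, hA, hB, f, g, hh, mem⟩ := t.exists_triangle_zero_one X
      have main : ∀ k : ℕ, t.ge (1 + (k:ℤ)) B := by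
        intro k
        induction k with
        | zero => simpa using hB
        | succ k ih =>
          set n : ℤ := 1 + (k:ℤ) with hndef
          have hw : ∀ P ∈ S, ∀ v : P ⟶ B⟦n⟧, v = 0 := by
            intro P hPS v
            have hPd := (hS1 P hPS).1
            obtain ⟨f', g', h', memn⟩ := shift_triangle_mem mem n
            have hv3 : v ≫ h' = 0 := derProj_hom_zero t hPd
              (t.le_monotone (show -n-1 ≤ (-1:ℤ) by omega) _
                (t.le_shift (-n) 1 (-n-1) (by ring) _ (t.le_shift 0 n (-n) (by ring) A hA))) _
            obtain ⟨k', hk'⟩ := coyon₃ memn v hv3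
            rw [hk', hX P hPS n (by omega) k', Limits.zero_comp]
          have hzH : IsZero (TD.H.obj (B⟦n⟧)) := H_isZero t TD hKS hED hS3 hw
          have hstep := GE_step t TD (show t.ge n B from ih) hzH
          rwa [show n + 1 = 1 + ((k+1 : ℕ):ℤ) by push_cast; ring] at hstep
      have hall : ∀ m : ℤ, t.ge m B := fun m =>
        t.ge_antitone (show m ≤ 1 + (((m-1).toNat : ℕ) : ℤ) by omega) _ (main (m-1).toNat)
      have hzB : IsZero B := hnd.2 B hall
      have : IsIso f := zero₃_isIso₁ mem hzB
      exact (t.le 0).prop_of_iso (asIso f) hA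
  · intro X
    constructor
    · intro hX P hPS m hm v
      have hXm : t.ge 1 (X⟦m⟧) :=
        t.ge_antitone (show (1:ℤ) ≤ -m by omega) _ (t.ge_shift 0 m (-m) (by ring) X hX)
      exact t.zero' v (hS1 P hPS).1.1 hXm
    · intro hX
      obtain ⟨A, B, hA, hB, f, g, hh, mem⟩ := t.exists_triangle X (-1) 0 (by ring)
      have main : ∀ k : ℕ, t.le (-1 - (k:ℤ)) A := by
        intro k
        induction k with
        | zero => simpa using hA
        | succ k ih =>
          set n : ℤ := -1 - (k:ℤ) with hndef
          have hw : ∀ P ∈ S, ∀ v : P ⟶ A⟦n⟧, v = 0 := by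
            intro P hPS v
            obtain ⟨f', g', h', memn⟩ := shift_triangle_mem mem n
            have hv1 : v ≫ f' = 0 := hX P hPS n (by omega) _
            obtain ⟨m', w, hm'⟩ := coyon₁ memn v hv1
            have hm0 : m' = 0 := t.zero' m' (hS1 P hPS).1.1
              (t.ge_antitone (show (1:ℤ) ≤ 1-n by omega) _
                (t.ge_shift (-n) (-1) (1-n) (by ring) _ (t.ge_shift 0 n (-n) (by ring) B hB)))
            rw [hm', hm0, Limits.zero_comp]
          have hzH : IsZero (TD.H.obj (A⟦n⟧)) := H_isZero t TD hKS hED hS3 hw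
          have hstep := LE_step t TD (show t.le n A from ih) hzH
          rwa [show n - 1 = -1 - ((k+1 : ℕ):ℤ) by push_cast; ring] at hstep
      have hall : ∀ m : ℤ, t.le m A := fun m =>
        t.le_monotone (show -1 - ((((-1-m).toNat : ℕ)) : ℤ) ≤ m by omega) _ (main (-1-m).toNat)
      have hzA : IsZero A := hnd.1 A hall
      have : IsIso g := zero₁_isIso₂ mem hzA
      exact (t.ge 0).prop_of_iso (asIso g).symm hB


end Paper
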